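/- For every positive integer $k$, $\sum_{n=1}^{\infty} \frac{H_n^2}{n(n+k)} = \frac{1}{k}\left\{ 3\zeta(3) + \frac{H_k^3 + 3H_k\zeta_k(2) + 2\zeta_k(3)}{3} - \frac{H_k^2 + \zeta_k(2)}{k} - \sum_{i=1}^{k-1} \frac{H_i}{i^2} + \zeta(2) H_{k-1} \right\}$. -/

import Mathlib

noncomputable def H (n : ℕ) : ℝ := ∑ j ∈ Finset.Icc 1 n, (1 : ℝ) / j

noncomputable def zh (m n : ℕ) : ℝ := ∑ j ∈ Finset.Icc 1 n, (1 : ℝ) / (j : ℝ) ^ m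

noncomputable def Z (s : ℕ) : ℝ := ∑' n : ℕ, 1 / ((n : ℝ) + 1) ^ s

open Finset Filter Topology

lemma H_succ (n : ℕ) : H (n + 1) = H n + 1 / ((n : ℝ) + 1) := by
  rw [H, H, Finset.sum_Icc_succ_top (by omega)]
  push_cast; ring

lemma H_zero : H 0 = 0 := by simp [H]

lemma H_one : H 1 = 1 := by simp [H]

lemma zh_succ (m n : ℕ) : zh m (n + 1) = zh m n + 1 / ((n : ℝ) + 1) ^ m := by
  rw [zh, zh, Finset.sum_Icc_succ_top (by omega)]
  push_cast; ring

lemma zh_zero (m : ℕ) : zh m 0 = 0 := by simp [zh]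

lemma H_nonneg (n : ℕ) : 0 ≤ H n := by
  induction n with
  | zero => simp [H_zero]
  | succ n ih => rw [H_succ]; positivity

lemma one_le_H (n : ℕ) : 1 ≤ H (n + 1) := by
  induction n with
  | zero => simp [H_one]
  | succ n ih =>
    rw [H_succ]
    have h : (0:ℝ) < 1 / (((n+1:ℕ):ℝ) + 1) := by positivity
    linarith

lemma H_le (n : ℕ) : H n ≤ 3 * (n : ℝ) ^ ((1 : ℝ)/3) := by
  induction n with
  | zero => simp [H_zero]
  | succ n ih =>
    rw [H_succ]
    push_cast
    set a : ℝ := ((n : ℝ) + 1) ^ ((1:ℝ)/3) with ha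
    set b : ℝ := (n : ℝ) ^ ((1:ℝ)/3) with hb
    have hn0 : (0:ℝ) ≤ (n:ℝ) := by positivity
    have hn1 : (0:ℝ) < (n:ℝ) + 1 := by positivity
    have ha0 : 0 < a := Real.rpow_pos_of_pos hn1 _
    have hb0 : 0 ≤ b := Real.rpow_nonneg hn0 _
    have ha3 : a ^ 3 = (n:ℝ) + 1 := by
      rw [ha, ← Real.rpow_natCast (((n:ℝ)+1) ^ ((1:ℝ)/3)) 3, ← Real.rpow_mul hn1.le]
      norm_num
    have hb3 : b ^ 3 = (n:ℝ) := by
      rw [hb, ← Real.rpow_natCast (((n:ℝ)) ^ ((1:ℝ)/3)) 3, ← Real.rpow_mul hn0]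
      norm_num
    have hba : b ≤ a := by
      apply Real.rpow_le_rpow hn0 (by linarith) (by norm_num)
    have key : 1 = (a - b) * (a^2 + a*b + b^2) := by nlinarith [ha3, hb3]
    have h2 : a ^ 2 + a*b + b^2 ≤ 3 * a^2 := by nlinarith
    have hpos : 0 < a^2 + a*b + b^2 := by nlinarith
    have hab : 1 / (3 * a^2) ≤ a - b := by
      rw [div_le_iff₀ (by positivity)]
      calc 1 = (a - b) * (a^2+a*b+b^2) := key
        _ ≤ (a-b) * (3*a^2) := by
            apply mul_le_mul_of_nonneg_left h2
            nlinarith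
    have haa : a ^ 2 ≤ (n:ℝ) + 1 := by
      calc a^2 = a^2 * 1 := by ring
        _ ≤ a^2 * a := by nlinarith [Real.one_le_rpow (by linarith : (1:ℝ) ≤ (n:ℝ)+1) (by norm_num : (0:ℝ) ≤ 1/3)]
        _ = (n:ℝ) + 1 := by rw [← ha3]; ring
    have : 1 / ((n:ℝ)+1) ≤ 3 * (a - b) := by
      calc 1 / ((n:ℝ)+1) ≤ 1 / a^2 := by
            apply one_div_le_one_div_of_le (by positivity) haa
        _ = 3 * (1 / (3*a^2)) := by field_simp
        _ ≤ 3 * (a - b) := by linarith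
    linarith

lemma Hsq_le (n : ℕ) : H n ^ 2 ≤ 9 * (n : ℝ) ^ ((2 : ℝ)/3) := by
  have h := H_le n
  have h2 : (3 * (n : ℝ) ^ ((1 : ℝ)/3))^2 = 9 * (n:ℝ) ^ ((2:ℝ)/3) := by
    rw [mul_pow, ← Real.rpow_natCast ((n:ℝ) ^ ((1:ℝ)/3)) 2, ← Real.rpow_mul (by positivity)]
    norm_num
  nlinarith [H_nonneg n, Real.rpow_nonneg (by positivity : (0:ℝ) ≤ (n:ℝ)) ((1:ℝ)/3)]

lemma sum_master : Summable (fun n : ℕ => H (n+1)^2 / ((n:ℝ)+1)^2) := by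
  have hb : Summable (fun n : ℕ => 9 * ((n:ℝ)+1) ^ (-(4:ℝ)/3)) := by
    apply Summable.mul_left
    have := (Real.summable_nat_rpow (p := -(4:ℝ)/3)).2 (by norm_num)
    have h1 := (summable_nat_add_iff (f := fun n : ℕ => (n:ℝ) ^ (-(4:ℝ)/3)) 1).2 this
    simpa [Nat.cast_add] using h1
  apply Summable.of_nonneg_of_le (fun n => by positivity) _ hb
  intro n
  rw [div_le_iff₀ (by positivity)]
  calc H (n+1)^2 ≤ 9 * ((n:ℝ)+1) ^ ((2:ℝ)/3) := by
        have := Hsq_le (n+1); push_cast at this ⊢; linarith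
    _ = 9 * ((n:ℝ)+1) ^ (-(4:ℝ)/3) * ((n:ℝ)+1)^2 := by
        rw [mul_assoc, ← Real.rpow_natCast ((n:ℝ)+1) 2, ← Real.rpow_add (by positivity)]
        norm_num
section Stage2

open Finset Filter Topology

lemma summable_le_master {f : ℕ → ℝ} (c : ℝ) (h0 : ∀ n, 0 ≤ f n)
    (hle : ∀ n, f n ≤ c * (H (n+1)^2 / ((n:ℝ)+1)^2)) : Summable f :=
  Summable.of_nonneg_of_le h0 hle (sum_master.mul_left c)

lemma H_eq_range (n : ℕ) : H n = ∑ l ∈ Finset.range n, 1/((l:ℝ)+1) := by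
  induction n with
  | zero => simp [H_zero]
  | succ n ih => rw [H_succ, Finset.sum_range_succ, ih]

lemma tele_partial (t : ℕ) (N : ℕ) :
    ∑ n ∈ Finset.range N, (1:ℝ)/(((n:ℝ)+1+t)*((n:ℝ)+2+t)) = 1/((t:ℝ)+1) - 1/((N:ℝ)+1+t) := by
  induction N with
  | zero => norm_num [add_comm]
  | succ N ih =>
    rw [Finset.sum_range_succ, ih]
    have h1 : ((N:ℝ)+1+t) > 0 := by positivity
    have h2 : ((N:ℝ)+2+t) > 0 := by positivity
    push_cast
    field_simp
    ring

lemma tendsto_inv_shift (c : ℝ) : Tendsto (fun N : ℕ => 1/((N:ℝ)+c)) atTop (𝓝 0) := by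
  simp only [one_div]
  exact tendsto_inv_atTop_zero.comp
    (tendsto_atTop_add_const_right _ c tendsto_natCast_atTop_atTop)

lemma tele (t : ℕ) : HasSum (fun n : ℕ => (1:ℝ)/(((n:ℝ)+1+t)*((n:ℝ)+2+t))) (1/((t:ℝ)+1)) := by
  rw [hasSum_iff_tendsto_nat_of_nonneg (fun n => by positivity)]
  simp only [tele_partial]
  have h := (tendsto_inv_shift ((1:ℝ)+t)).const_sub (1/((t:ℝ)+1))
  simp only [sub_zero] at h
  convert h using 2 with N <;> ring

lemma ftele (m n : ℕ) :
    ∑ l ∈ Finset.range m, (1:ℝ)/(((n:ℝ)+1+l)*((n:ℝ)+2+l)) = 1/((n:ℝ)+1) - 1/((n:ℝ)+1+m) := by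
  induction m with
  | zero => norm_num
  | succ m ih =>
    rw [Finset.sum_range_succ, ih]
    have h1 : ((n:ℝ)+1+m) > 0 := by positivity
    have h2 : ((n:ℝ)+2+m) > 0 := by positivity
    push_cast
    field_simp
    ring

lemma E1 {m : ℕ} (hm : 0 < m) :
    HasSum (fun n : ℕ => (1:ℝ)/(((n:ℝ)+1)*((n:ℝ)+1+m))) (H m/(m:ℝ)) := by
  have h := hasSum_sum (s := Finset.range m)
    (f := fun (l : ℕ) (n : ℕ) => (1:ℝ)/(((n:ℝ)+1+(l:ℝ))*((n:ℝ)+2+(l:ℝ))))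
    (a := fun (l : ℕ) => 1/((l:ℝ)+1)) (fun l _ => tele l)
  rw [← H_eq_range] at h
  have h2 : HasSum (fun n : ℕ => (m:ℝ) * ((1:ℝ)/(((n:ℝ)+1)*((n:ℝ)+1+m)))) (H m) := by
    have hfun : (fun n : ℕ => (m:ℝ) * ((1:ℝ)/(((n:ℝ)+1)*((n:ℝ)+1+m)))) =
        fun n : ℕ => ∑ l ∈ Finset.range m, (1:ℝ)/(((n:ℝ)+1+(l:ℝ))*((n:ℝ)+2+(l:ℝ))) := by
      funext n
      rw [ftele]
      have h1 : ((n:ℝ)+1) > 0 := by positivity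
      have h3 : ((n:ℝ)+1+m) > 0 := by positivity
      field_simp
      ring
    rw [hfun]; exact h
  have h3 := h2.div_const (m:ℝ)
  have hm' : (m:ℝ) ≠ 0 := Nat.cast_ne_zero.2 hm.ne'
  have h4 : (fun n : ℕ => (1:ℝ)/(((n:ℝ)+1)*((n:ℝ)+1+m))) =
      fun n : ℕ => (m:ℝ) * ((1:ℝ)/(((n:ℝ)+1)*((n:ℝ)+1+m))) / m := by
    funext n; field_simp
  rw [h4]; exact h3

lemma summable_Z {s : ℕ} (hs : 2 ≤ s) : Summable (fun n : ℕ => 1/((n:ℝ)+1)^s) := by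
  have h0 := Real.summable_one_div_nat_pow.2 hs
  have h1 := (summable_nat_add_iff (f := fun n : ℕ => 1/(n:ℝ)^s) 1).2 h0
  simpa using h1

lemma Z_hasSum {s : ℕ} (hs : 2 ≤ s) : HasSum (fun n : ℕ => 1/((n:ℝ)+1)^s) (Z s) :=
  (summable_Z hs).hasSum

lemma abel_partial (f : ℕ → ℝ) (t : ℕ) (N : ℕ) :
    ∑ n ∈ Finset.range N, f (n+1) * ((1:ℝ)/((n:ℝ)+1+t) - 1/((n:ℝ)+2+t)) =
    ∑ n ∈ Finset.range N, (f (n+1) - f n) * (1/((n:ℝ)+1+t)) + f 0 * (1/((t:ℝ)+1))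
      - f N * (1/((N:ℝ)+1+t)) := by
  induction N with
  | zero => norm_num [add_comm]
  | succ N ih =>
    rw [Finset.sum_range_succ, Finset.sum_range_succ
      (f := fun n => (f (n+1) - f n) * (1/((n:ℝ)+1+t))), ih]
    push_cast
    ring

lemma abel_hasSum (f : ℕ → ℝ) (t : ℕ) (hf0 : f 0 = 0)
    (hnn : ∀ n : ℕ, 0 ≤ f (n+1) * ((1:ℝ)/((n:ℝ)+1+t) - 1/((n:ℝ)+2+t)))
    (hg : Summable (fun n : ℕ => (f (n+1) - f n) * (1/((n:ℝ)+1+t))))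
    (hlim : Tendsto (fun N : ℕ => f N * (1/((N:ℝ)+1+t))) atTop (𝓝 0)) :
    HasSum (fun n : ℕ => f (n+1) * ((1:ℝ)/((n:ℝ)+1+t) - 1/((n:ℝ)+2+t)))
      (∑' n : ℕ, (f (n+1) - f n) * (1/((n:ℝ)+1+t))) := by
  rw [hasSum_iff_tendsto_nat_of_nonneg hnn]
  simp only [abel_partial f t]
  have h1 := hg.hasSum.tendsto_sum_nat
  have h2 := h1.sub hlim
  simp only [sub_zero] at h2
  simpa [hf0] using h2

lemma tendsto_rpow_nat (y : ℝ) (hy : 0 < y) :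
    Tendsto (fun N : ℕ => (N:ℝ) ^ (-y)) atTop (𝓝 0) :=
  (tendsto_rpow_neg_atTop hy).comp tendsto_natCast_atTop_atTop

lemma tendsto_Hsq_div (t : ℕ) :
    Tendsto (fun N : ℕ => H N ^ 2 * (1/((N:ℝ)+1+t))) atTop (𝓝 0) := by
  apply squeeze_zero' (g := fun N : ℕ => 9 * (N:ℝ) ^ ((-((1:ℝ)/3))))
  · filter_upwards with N
    have := H_nonneg N
    positivity
  · filter_upwards [eventually_ge_atTop 1] with N hN
    have hN0 : (0:ℝ) < (N:ℝ) := by exact_mod_cast hN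
    have h1 : H N ^ 2 * (1/((N:ℝ)+1+t)) ≤ 9 * (N:ℝ)^((2:ℝ)/3) * (1/(N:ℝ)) := by
      apply mul_le_mul (Hsq_le N) _ (by positivity) (by positivity)
      apply one_div_le_one_div_of_le hN0 (by push_cast; linarith)
    calc H N ^ 2 * (1/((N:ℝ)+1+t)) ≤ 9 * (N:ℝ)^((2:ℝ)/3) * (1/(N:ℝ)) := h1
      _ = 9 * (N:ℝ) ^ ((-((1:ℝ)/3))) := by
          rw [mul_assoc, one_div, ← Real.rpow_neg_one (N:ℝ),
            ← Real.rpow_add hN0]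
          norm_num
  · simpa using (tendsto_rpow_nat ((1:ℝ)/3) (by norm_num)).const_mul (9:ℝ)

lemma tendsto_H_div (t : ℕ) :
    Tendsto (fun N : ℕ => H N * (1/((N:ℝ)+1+t))) atTop (𝓝 0) := by
  apply squeeze_zero' (g := fun N : ℕ => H N ^ 2 * (1/((N:ℝ)+1+t)))
  · filter_upwards with N
    have := H_nonneg N
    positivity
  · filter_upwards with N
    apply mul_le_mul_of_nonneg_right _ (by positivity)
    cases N with
    | zero => simp [H_zero]
    | succ n => nlinarith [H_nonneg (n+1), one_le_H n]
  · exact tendsto_Hsq_div t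

end Stage2
section Stage3

open Finset Filter Topology

lemma sumD0 : Summable (fun n : ℕ => H (n+1) / ((n:ℝ)+1)^2) := by
  apply summable_le_master 1 (fun n => div_nonneg (H_nonneg (n+1)) (by positivity))
  intro n
  rw [one_mul]
  apply div_le_div_of_nonneg_right ?_ (by positivity)
  nlinarith [one_le_H n, H_nonneg (n+1)]

noncomputable def D0 : ℝ := ∑' n : ℕ, H (n+1) / ((n:ℝ)+1)^2

noncomputable def Pf : ℕ × ℕ → ℝ :=
  fun p => 1/(((p.1:ℝ)+1)*((p.2:ℝ)+1)*((p.1:ℝ)+(p.2:ℝ)+2))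

noncomputable def Gf : ℕ × ℕ → ℝ :=
  fun p => 1/(((p.1:ℝ)+1)*((p.1:ℝ)+(p.2:ℝ)+2)^2)

lemma rowE (j : ℕ) :
    HasSum (fun m : ℕ => 1/(((m:ℝ)+1)*((m:ℝ)+(j:ℝ)+2))) (H (j+1)/((j:ℝ)+1)) := by
  have h := E1 (m := j+1) (Nat.succ_pos j)
  convert h using 2 with m
  · push_cast; ring
  · push_cast; ring

lemma Pf_nonneg (p : ℕ × ℕ) : 0 ≤ Pf p := by simp only [Pf]; positivity

lemma Gf_nonneg (p : ℕ × ℕ) : 0 ≤ Gf p := by simp only [Gf]; positivity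

lemma Pf_rows (j : ℕ) : HasSum (fun m => Pf (j, m)) (H (j+1)/((j:ℝ)+1)^2) := by
  have h := (rowE j).mul_left (1/((j:ℝ)+1))
  have hf : (fun m : ℕ => Pf (j, m)) =
      fun m : ℕ => 1/((j:ℝ)+1) * (1/(((m:ℝ)+1)*((m:ℝ)+(j:ℝ)+2))) := by
    funext m
    simp only [Pf]
    rw [one_div_mul_one_div]
    ring_nf
  have hv : 1/((j:ℝ)+1) * (H (j+1)/((j:ℝ)+1)) = H (j+1)/((j:ℝ)+1)^2 := by
    rw [sq, mul_comm, div_mul_div_comm, mul_one]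
  rw [hf]
  rw [hv] at h
  exact h

lemma sumPf : Summable Pf := by
  refine (summable_prod_of_nonneg (fun p => Pf_nonneg p)).2
    ⟨fun j => (Pf_rows j).summable, ?_⟩
  apply Summable.congr sumD0
  intro j
  exact ((Pf_rows j).tsum_eq).symm

lemma tsumPf : ∑' p, Pf p = D0 := by
  rw [Summable.tsum_prod sumPf]
  rw [D0]
  exact tsum_congr fun j => (Pf_rows j).tsum_eq

lemma Gf_rows_summable (j : ℕ) : Summable (fun m => Gf (j, m)) := by
  apply Summable.of_nonneg_of_le (fun m => Gf_nonneg (j, m)) _ (summable_Z (le_refl 2))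
  intro m
  show 1/(((j:ℝ)+1)*((j:ℝ)+(m:ℝ)+2)^2) ≤ 1/((m:ℝ)+1)^2
  have hj : (0:ℝ) ≤ (j:ℝ) := Nat.cast_nonneg j
  have hm : (0:ℝ) ≤ (m:ℝ) := Nat.cast_nonneg m
  apply one_div_le_one_div_of_le (by positivity)
  nlinarith

lemma Gf_rowsum_le (j : ℕ) : ∑' m, Gf (j, m) ≤ 1/((j:ℝ)+1)^2 := by
  have hb := (tele j).summable.mul_left (1/((j:ℝ)+1))
  have h1 : ∑' m, Gf (j, m) ≤
      ∑' m : ℕ, (1/((j:ℝ)+1)) * (1/(((m:ℝ)+1+j)*((m:ℝ)+2+j))) := by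
    apply Summable.tsum_le_tsum _ (Gf_rows_summable j) hb
    intro m
    show 1/(((j:ℝ)+1)*((j:ℝ)+(m:ℝ)+2)^2) ≤ _
    have hj : (0:ℝ) ≤ (j:ℝ) := Nat.cast_nonneg j
    have hm : (0:ℝ) ≤ (m:ℝ) := Nat.cast_nonneg m
    rw [one_div_mul_one_div]
    apply one_div_le_one_div_of_le (by positivity)
    nlinarith
  calc ∑' m, Gf (j, m) ≤ _ := h1
    _ = (1/((j:ℝ)+1)) * (1/((j:ℝ)+1)) := by
        rw [tsum_mul_left, (tele j).tsum_eq]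
    _ = 1/((j:ℝ)+1)^2 := by field_simp

lemma sumGf : Summable Gf := by
  refine (summable_prod_of_nonneg (fun p => Gf_nonneg p)).2
    ⟨fun j => Gf_rows_summable j, ?_⟩
  apply Summable.of_nonneg_of_le (fun j => tsum_nonneg (fun m => Gf_nonneg (j, m)))
    (fun j => Gf_rowsum_le j)
  exact summable_Z (le_refl 2)

lemma sumGfswap : Summable (fun p : ℕ × ℕ => Gf p.swap) :=
  (Equiv.prodComm ℕ ℕ).summable_iff.2 sumGf

lemma tsum_Gf_swap : ∑' p : ℕ × ℕ, Gf p.swap = ∑' p, Gf p :=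
  (Equiv.prodComm ℕ ℕ).tsum_eq Gf

lemma Pf_split (p : ℕ × ℕ) : Pf p = Gf p + Gf p.swap := by
  obtain ⟨j, m⟩ := p
  simp only [Pf, Gf, Prod.swap_prod_mk]
  have h1 : ((j:ℝ)+1) > 0 := by positivity
  have h2 : ((m:ℝ)+1) > 0 := by positivity
  have h3 : ((j:ℝ)+(m:ℝ)+2) > 0 := by positivity
  have h4 : ((m:ℝ)+(j:ℝ)+2) > 0 := by positivity
  field_simp
  ring

lemma tsumPf_eq_two_Gf : ∑' p, Pf p = 2 * ∑' p, Gf p := by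
  calc ∑' p, Pf p = ∑' p : ℕ × ℕ, (Gf p + Gf p.swap) := tsum_congr Pf_split
    _ = ∑' p, Gf p + ∑' p : ℕ × ℕ, Gf p.swap := Summable.tsum_add sumGf sumGfswap
    _ = 2 * ∑' p, Gf p := by rw [tsum_Gf_swap]; ring

noncomputable def Ff : ℕ × ℕ → ℝ :=
  fun q => if q.2 ≤ q.1 then 1/(((q.2:ℝ)+1)*((q.1:ℝ)+2)^2) else 0

def iFG : ℕ × ℕ → ℕ × ℕ := fun p => (p.1 + p.2, p.1)

lemma iFG_inj : Function.Injective iFG := by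
  intro p q h
  simp only [iFG, Prod.mk.injEq] at h
  obtain ⟨h1, h2⟩ := h
  exact Prod.ext h2 (by omega)

lemma Ff_supp : ∀ q ∉ Set.range iFG, Ff q = 0 := by
  intro q hq
  have hc : ¬ (q.2 ≤ q.1) := by
    intro hle
    exact hq ⟨(q.2, q.1 - q.2), Prod.ext (by simp only [iFG]; omega) (by simp [iFG])⟩
  simp only [Ff, if_neg hc]

lemma Ff_comp (p : ℕ × ℕ) : Ff (iFG p) = Gf p := by
  obtain ⟨j, m⟩ := p
  simp only [Ff, iFG, Gf]
  simp only [Nat.le_add_right, ite_true]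
  push_cast
  ring_nf

lemma sumFf : Summable Ff := by
  rw [← (iFG_inj.summable_iff Ff_supp : Summable (Ff ∘ iFG) ↔ _)]
  exact sumGf.congr fun p => (Ff_comp p).symm

lemma tsumFf : ∑' q, Ff q = ∑' p, Gf p := by
  rw [← iFG_inj.tsum_eq (f := Ff) (Function.support_subset_iff'.2 Ff_supp)]
  exact tsum_congr fun p => Ff_comp p

lemma Ff_inner (s : ℕ) : ∑' j : ℕ, Ff (s, j) = H (s+1)/((s:ℝ)+2)^2 := by
  rw [tsum_eq_sum (s := Finset.range (s+1)) (f := fun j => Ff (s, j))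
    (by intro b hb; simp only [Finset.mem_range] at hb; simp only [Ff]; rw [if_neg]; omega)]
  rw [H_eq_range, Finset.sum_div]
  apply Finset.sum_congr rfl
  intro j hj
  simp only [Finset.mem_range] at hj
  simp only [Ff]
  rw [if_pos (by omega)]
  field_simp

lemma tsumFf_eq : ∑' p, Gf p = ∑' s : ℕ, H (s+1)/((s:ℝ)+2)^2 := by
  rw [← tsumFf, Summable.tsum_prod sumFf]
  exact tsum_congr fun s => Ff_inner s

lemma tail_shift : ∑' s : ℕ, H (s+1)/((s:ℝ)+2)^2 = D0 - Z 3 := by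
  have hsum2 : Summable (fun s : ℕ => H (s+2)/((s:ℝ)+2)^2) := by
    have := (summable_nat_add_iff 1).2 sumD0
    apply this.congr
    intro s
    push_cast
    ring_nf
  have hsum3 : Summable (fun s : ℕ => 1/((s:ℝ)+2)^3) := by
    have := (summable_nat_add_iff 1).2 (summable_Z (s := 3) (by norm_num))
    apply this.congr
    intro s
    push_cast
    ring_nf
  have h1 : ∑' s : ℕ, H (s+2)/((s:ℝ)+2)^2 = D0 - 1 := by
    have h := Summable.sum_add_tsum_nat_add 1 sumD0
    rw [← D0] at h
    have h2 : ∑ i ∈ Finset.range 1, H (i+1)/((i:ℝ)+1)^2 = 1 := by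
      simp [H_one]
    rw [h2] at h
    have h3 : ∑' s : ℕ, H (s+2)/((s:ℝ)+2)^2 = ∑' i : ℕ, H (i+1+1)/(((i+1:ℕ):ℝ)+1)^2 := by
      apply tsum_congr; intro s; push_cast; ring_nf
    rw [h3]
    linarith
  have h2 : ∑' s : ℕ, 1/((s:ℝ)+2)^3 = Z 3 - 1 := by
    have h := Summable.sum_add_tsum_nat_add 1 (summable_Z (s := 3) (by norm_num))
    rw [show (∑' n : ℕ, 1/((n:ℝ)+1)^3) = Z 3 from rfl] at h
    have hz : ∑ i ∈ Finset.range 1, 1/((i:ℝ)+1)^3 = 1 := by norm_num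
    rw [hz] at h
    have h3 : ∑' s : ℕ, 1/((s:ℝ)+2)^3 = ∑' i : ℕ, 1/(((i+1:ℕ):ℝ)+1)^3 := by
      apply tsum_congr; intro s; push_cast; ring_nf
    rw [h3]
    linarith
  have hsplit : ∀ s : ℕ, H (s+1)/((s:ℝ)+2)^2 = H (s+2)/((s:ℝ)+2)^2 - 1/((s:ℝ)+2)^3 := by
    intro s
    have hH : H (s+2) = H (s+1) + 1/((s:ℝ)+2) := by
      have h := H_succ (s+1)
      push_cast at h
      rw [show ((s:ℝ)+1+1) = (s:ℝ)+2 by ring] at h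
      exact h
    rw [hH]
    have hp : ((s:ℝ)+2) > 0 := by positivity
    field_simp
    ring
  calc ∑' s : ℕ, H (s+1)/((s:ℝ)+2)^2
      = ∑' s : ℕ, (H (s+2)/((s:ℝ)+2)^2 - 1/((s:ℝ)+2)^3) := tsum_congr hsplit
    _ = (∑' s : ℕ, H (s+2)/((s:ℝ)+2)^2) - ∑' s : ℕ, 1/((s:ℝ)+2)^3 := Summable.tsum_sub hsum2 hsum3
    _ = D0 - Z 3 := by rw [h1, h2]; ring

lemma D0_eq : D0 = 2 * Z 3 := by
  have h := tsumPf
  rw [tsumPf_eq_two_Gf, tsumFf_eq, tail_shift] at h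
  linarith

lemma hD0 : HasSum (fun n : ℕ => H (n+1) / ((n:ℝ)+1)^2) (2 * Z 3) := by
  rw [← D0_eq]
  exact sumD0.hasSum

end Stage3
section Stage4

open Finset Filter Topology

lemma sumE1' (t : ℕ) : Summable (fun n : ℕ => (1:ℝ)/(((n:ℝ)+1)*((n:ℝ)+1+t))) := by
  cases t with
  | zero =>
    apply (summable_Z (le_refl 2)).congr
    intro n
    push_cast
    ring_nf
  | succ t => exact (E1 (Nat.succ_pos t)).summable

noncomputable def vt : ℕ → ℝ
  | 0 => Z 2
  | (t+1) => H (t+1)/((t+1:ℕ):ℝ)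

lemma hvt (t : ℕ) : HasSum (fun n : ℕ => (1:ℝ)/(((n:ℝ)+1)*((n:ℝ)+1+t))) (vt t) := by
  cases t with
  | zero =>
    have h := Z_hasSum (le_refl 2)
    have hfun : (fun n : ℕ => 1/((n:ℝ)+1)^2) =
        fun n : ℕ => (1:ℝ)/(((n:ℝ)+1)*((n:ℝ)+1+(0:ℕ))) := by
      funext n; push_cast; ring_nf
    rw [← hfun]
    exact h
  | succ t => exact E1 (Nat.succ_pos t)

lemma hg_t (t : ℕ) :
    HasSum (fun n : ℕ => (H (n+1) - H n) * (1/((n:ℝ)+1+t))) (vt t) := by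
  have h := hvt t
  have hfun : (fun n : ℕ => (1:ℝ)/(((n:ℝ)+1)*((n:ℝ)+1+t))) =
      fun n : ℕ => (H (n+1) - H n) * (1/((n:ℝ)+1+t)) := by
    funext n
    rw [H_succ, add_sub_cancel_left, one_div_mul_one_div]
  rw [← hfun]
  exact h

lemma diff_nonneg_aux (n t : ℕ) : (0:ℝ) ≤ 1/((n:ℝ)+1+t) - 1/((n:ℝ)+2+t) := by
  rw [sub_nonneg]
  apply one_div_le_one_div_of_le (by positivity)
  linarith

lemma habel_t (t : ℕ) :
    HasSum (fun n : ℕ => H (n+1) * ((1:ℝ)/((n:ℝ)+1+t) - 1/((n:ℝ)+2+t))) (vt t) := by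
  have h := abel_hasSum H t H_zero
    (fun n => mul_nonneg (H_nonneg (n+1)) (diff_nonneg_aux n t))
    (hg_t t).summable (tendsto_H_div t)
  rw [(hg_t t).tsum_eq] at h
  exact h

lemma range_Icc_shift (g : ℕ → ℝ) (u : ℕ) :
    ∑ t ∈ Finset.range u, g (t+1) = ∑ m ∈ Finset.Icc 1 u, g m := by
  induction u with
  | zero => simp
  | succ u ih => rw [Finset.sum_range_succ, Finset.sum_Icc_succ_top (by omega), ih]

lemma vt_sum {l : ℕ} (hl : 0 < l) :
    ∑ t ∈ Finset.range l, vt t = Z 2 + ∑ m ∈ Finset.Icc 1 (l-1), H m/(m:ℝ) := by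
  obtain ⟨u, rfl⟩ := Nat.exists_eq_add_of_lt hl
  rw [zero_add]
  rw [Finset.sum_range_succ']
  have h1 : ∑ t ∈ Finset.range u, vt (t+1) = ∑ m ∈ Finset.Icc 1 u, H m/(m:ℝ) := by
    rw [← range_Icc_shift (fun m => H m/(m:ℝ)) u]
    apply Finset.sum_congr rfl
    intro t _
    show vt (t+1) = H (t+1)/((t+1:ℕ):ℝ)
    rfl
  rw [h1]
  show _ + vt 0 = _
  rw [show vt 0 = Z 2 from rfl]
  simp [add_comm]

lemma hD {l : ℕ} (hl : 0 < l) :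
    HasSum (fun n : ℕ => H (n+1) * (1/(((n:ℝ)+1)*((n:ℝ)+1+l))))
      ((Z 2 + ∑ m ∈ Finset.Icc 1 (l-1), H m/(m:ℝ)) / (l:ℝ)) := by
  have hl' : (l:ℝ) ≠ 0 := Nat.cast_ne_zero.2 hl.ne'
  have h := hasSum_sum (s := Finset.range l)
    (f := fun (t : ℕ) (n : ℕ) => H (n+1) * ((1:ℝ)/((n:ℝ)+1+t) - 1/((n:ℝ)+2+t)))
    (a := fun t => vt t) (fun t _ => habel_t t)
  rw [vt_sum hl] at h
  have hfun : (fun n : ℕ => ∑ t ∈ Finset.range l,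
      H (n+1) * ((1:ℝ)/((n:ℝ)+1+t) - 1/((n:ℝ)+2+t))) =
      fun n : ℕ => (l:ℝ) * (H (n+1) * (1/(((n:ℝ)+1)*((n:ℝ)+1+l)))) := by
    funext n
    rw [← Finset.mul_sum]
    have hs : ∑ t ∈ Finset.range l, ((1:ℝ)/((n:ℝ)+1+t) - 1/((n:ℝ)+2+t)) =
        1/((n:ℝ)+1) - 1/((n:ℝ)+1+l) := by
      rw [← ftele l n]
      apply Finset.sum_congr rfl
      intro t _
      have h1 : ((n:ℝ)+1+t) > 0 := by positivity
      have h2 : ((n:ℝ)+2+t) > 0 := by positivity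
      field_simp
      ring
    rw [hs]
    have h1 : ((n:ℝ)+1) > 0 := by positivity
    have h2 : ((n:ℝ)+1+l) > 0 := by positivity
    field_simp
    ring
  rw [hfun] at h
  have h2 := h.div_const (l:ℝ)
  have h3 : (fun n : ℕ => H (n+1) * (1/(((n:ℝ)+1)*((n:ℝ)+1+l)))) =
      fun n : ℕ => (l:ℝ) * (H (n+1) * (1/(((n:ℝ)+1)*((n:ℝ)+1+l)))) / (l:ℝ) := by
    funext n
    field_simp
  rw [h3]
  exact h2

lemma hQ {l : ℕ} (hl : 0 < l) :
    HasSum (fun n : ℕ => 1/(((n:ℝ)+1)^2*((n:ℝ)+1+l))) (Z 2/(l:ℝ) - H l/(l:ℝ)^2) := by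
  have hl' : (l:ℝ) ≠ 0 := Nat.cast_ne_zero.2 hl.ne'
  have h2 := Z_hasSum (le_refl 2)
  have h1 := E1 hl
  have h3 := h2.sub h1
  have h4 := h3.div_const (l:ℝ)
  have hfun : (fun n : ℕ => 1/(((n:ℝ)+1)^2*((n:ℝ)+1+l))) =
      fun n : ℕ => (1/((n:ℝ)+1)^2 - 1/(((n:ℝ)+1)*((n:ℝ)+1+l))) / (l:ℝ) := by
    funext n
    have ha : ((n:ℝ)+1) > 0 := by positivity
    have hb : ((n:ℝ)+1+l) > 0 := by positivity
    field_simp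
    ring
  have hv : (Z 2 - H l/(l:ℝ)) / (l:ℝ) = Z 2/(l:ℝ) - H l/(l:ℝ)^2 := by
    field_simp
  rw [hfun, ← hv]
  exact h4

lemma sum_q (l : ℕ) : Summable (fun n : ℕ => 1/(((n:ℝ)+1)^2*((n:ℝ)+1+l))) := by
  apply summable_le_master 1 (fun n => by positivity)
  intro n
  rw [one_mul]
  rw [div_le_div_iff₀ (by positivity) (by positivity)]
  have h1 : (1:ℝ) ≤ H (n+1)^2 := by nlinarith [one_le_H n]
  nlinarith [sq_nonneg ((n:ℝ)+1), Nat.cast_nonneg (α := ℝ) l, sq_nonneg ((n:ℝ)+1+l),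
    mul_pos (by positivity : (0:ℝ) < ((n:ℝ)+1)^2) (by positivity : (0:ℝ) < (n:ℝ)+1+l)]

noncomputable def Cv : ℕ → ℝ
  | 0 => 3 * Z 3
  | (l+1) => 2 * ((Z 2 + ∑ m ∈ Finset.Icc 1 l, H m/(m:ℝ)) / ((l+1:ℕ):ℝ))
      - (Z 2/((l+1:ℕ):ℝ) - H (l+1)/((l+1:ℕ):ℝ)^2)

noncomputable def Dv : ℕ → ℝ
  | 0 => 2 * Z 3
  | (l+1) => (Z 2 + ∑ m ∈ Finset.Icc 1 l, H m/(m:ℝ)) / ((l+1:ℕ):ℝ)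

noncomputable def Qv : ℕ → ℝ
  | 0 => Z 3
  | (l+1) => Z 2/((l+1:ℕ):ℝ) - H (l+1)/((l+1:ℕ):ℝ)^2

lemma hDv (l : ℕ) :
    HasSum (fun n : ℕ => H (n+1) * (1/(((n:ℝ)+1)*((n:ℝ)+1+l)))) (Dv l) := by
  cases l with
  | zero =>
    have h := hD0
    have hfun : (fun n : ℕ => H (n+1) / ((n:ℝ)+1)^2) =
        fun n : ℕ => H (n+1) * (1/(((n:ℝ)+1)*((n:ℝ)+1+(0:ℕ)))) := by
      funext n
      push_cast
      rw [add_zero, sq, mul_one_div]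
    rw [← hfun]
    exact h
  | succ l =>
    have h := hD (l := l+1) (Nat.succ_pos l)
    simp only [Nat.add_sub_cancel] at h
    exact h

lemma hQv (l : ℕ) :
    HasSum (fun n : ℕ => 1/(((n:ℝ)+1)^2*((n:ℝ)+1+l))) (Qv l) := by
  cases l with
  | zero =>
    have h := Z_hasSum (s := 3) (by norm_num)
    have hfun : (fun n : ℕ => 1/((n:ℝ)+1)^3) =
        fun n : ℕ => 1/(((n:ℝ)+1)^2*((n:ℝ)+1+(0:ℕ))) := by
      funext n
      push_cast
      ring_nf
    rw [← hfun]
    exact h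
  | succ l => exact hQ (Nat.succ_pos l)

lemma Cv_eq (l : ℕ) : Cv l = 2 * Dv l - Qv l := by
  cases l with
  | zero => show 3 * Z 3 = 2 * (2 * Z 3) - Z 3; ring
  | succ l => rfl

lemma hgC (l : ℕ) :
    HasSum (fun n : ℕ => (H (n+1)^2 - H n^2) * (1/((n:ℝ)+1+l))) (Cv l) := by
  have h := ((hDv l).mul_left 2).sub (hQv l)
  rw [← Cv_eq l] at h
  have hfun : (fun n : ℕ => 2 * (H (n+1) * (1/(((n:ℝ)+1)*((n:ℝ)+1+l)))) -
      1/(((n:ℝ)+1)^2*((n:ℝ)+1+l))) =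
      fun n : ℕ => (H (n+1)^2 - H n^2) * (1/((n:ℝ)+1+l)) := by
    funext n
    have hH : H n = H (n+1) - 1/((n:ℝ)+1) := by rw [H_succ]; ring
    rw [hH]
    have ha : ((n:ℝ)+1) > 0 := by positivity
    have hb : ((n:ℝ)+1+l) > 0 := by positivity
    field_simp
    ring
  rw [← hfun]
  exact h

lemma hC (l : ℕ) :
    HasSum (fun n : ℕ => H (n+1)^2 * ((1:ℝ)/((n:ℝ)+1+l) - 1/((n:ℝ)+2+l))) (Cv l) := by
  have h := abel_hasSum (fun n => H n ^ 2) l (by simp [H_zero])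
    (fun n => mul_nonneg (sq_nonneg _) (diff_nonneg_aux n l))
    ((hgC l).summable) (tendsto_Hsq_div l)
  rw [(hgC l).tsum_eq] at h
  exact h

end Stage4
section Stage5

open Finset Filter Topology

lemma SSval (j : ℕ) : ∑ m ∈ Finset.Icc 1 j, H m/(m:ℝ) = (H j^2 + zh 2 j)/2 := by
  induction j with
  | zero => simp [H_zero, zh_zero]
  | succ j ih =>
    rw [Finset.sum_Icc_succ_top (by omega), ih, H_succ, zh_succ]
    have hp : ((j:ℝ)+1) ≠ 0 := by positivity
    push_cast
    field_simp
    ring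

lemma KEY (u : ℕ) :
    ∑ t ∈ Finset.range u, ((H t^2 + zh 2 t)/((t:ℝ)+1) + H (t+1)/((t:ℝ)+1)^2) =
      (H (u+1)^3 + 3*H (u+1)*zh 2 (u+1) + 2*zh 3 (u+1))/3
        - (H (u+1)^2 + zh 2 (u+1))/((u:ℝ)+1) - ∑ i ∈ Finset.Icc 1 u, H i/(i:ℝ)^2 := by
  induction u with
  | zero =>
    have h1 : H 1 = 1 := H_one
    have h2 : zh 2 1 = 1 := by rw [show (1:ℕ) = 0 + 1 from rfl, zh_succ, zh_zero]; norm_num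
    have h3 : zh 3 1 = 1 := by rw [show (1:ℕ) = 0 + 1 from rfl, zh_succ, zh_zero]; norm_num
    simp [h1, h2, h3]
    norm_num
  | succ u ih =>
    rw [Finset.sum_range_succ, ih]
    have hp : ((u:ℝ)+1) ≠ 0 := by positivity
    have hq : ((u:ℝ)+2) ≠ 0 := by positivity
    have e1 : H (u+2) = H (u+1) + 1/((u:ℝ)+2) := by
      have := H_succ (u+1); push_cast at this; rw [this]; ring_nf
    have e2 : zh 2 (u+2) = zh 2 (u+1) + 1/((u:ℝ)+2)^2 := by
      have := zh_succ 2 (u+1); push_cast at this; rw [this]; ring_nf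
    have e3 : zh 3 (u+2) = zh 3 (u+1) + 1/((u:ℝ)+2)^3 := by
      have := zh_succ 3 (u+1); push_cast at this; rw [this]; ring_nf
    have e4 : H u = H (u+1) - 1/((u:ℝ)+1) := by rw [H_succ]; ring
    have e5 : zh 2 u = zh 2 (u+1) - 1/((u:ℝ)+1)^2 := by rw [zh_succ]; ring
    have e6 : ∑ i ∈ Finset.Icc 1 (u+1), H i/(i:ℝ)^2 =
        ∑ i ∈ Finset.Icc 1 u, H i/(i:ℝ)^2 + H (u+1)/((u:ℝ)+1)^2 := by
      rw [Finset.sum_Icc_succ_top (by omega)]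
      push_cast
      ring_nf
    rw [e1, e2, e3, e4, e5, e6]
    push_cast
    field_simp
    ring

lemma Cv_succ (t : ℕ) : Cv (t+1) = Z 2 * (1/((t:ℝ)+1)) +
    ((H t^2 + zh 2 t)/((t:ℝ)+1) + H (t+1)/((t:ℝ)+1)^2) := by
  show 2 * ((Z 2 + ∑ m ∈ Finset.Icc 1 t, H m/(m:ℝ)) / ((t+1:ℕ):ℝ))
      - (Z 2/((t+1:ℕ):ℝ) - H (t+1)/((t+1:ℕ):ℝ)^2) = _
  rw [SSval t]
  have hp : ((t:ℝ)+1) ≠ 0 := by positivity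
  push_cast
  field_simp
  ring

lemma Cv_range (u : ℕ) : ∑ l ∈ Finset.range (u+1), Cv l =
    3 * Z 3 + Z 2 * H u +
      ((H (u+1)^3 + 3*H (u+1)*zh 2 (u+1) + 2*zh 3 (u+1))/3
        - (H (u+1)^2 + zh 2 (u+1))/((u:ℝ)+1) - ∑ i ∈ Finset.Icc 1 u, H i/(i:ℝ)^2) := by
  rw [Finset.sum_range_succ']
  rw [show Cv 0 = 3 * Z 3 from rfl]
  have h1 : ∑ l ∈ Finset.range u, Cv (l+1) =
      Z 2 * H u + ∑ t ∈ Finset.range u, ((H t^2 + zh 2 t)/((t:ℝ)+1) + H (t+1)/((t:ℝ)+1)^2) := by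
    rw [H_eq_range, Finset.mul_sum, ← Finset.sum_add_distrib]
    apply Finset.sum_congr rfl
    intro t _
    rw [Cv_succ t]
  rw [h1, KEY]
  ring

lemma sumA (u : ℕ) :
    Summable (fun n : ℕ => H (n+1)^2 / (((n:ℝ)+1)*((n:ℝ)+1+((u+1:ℕ):ℝ)))) := by
  apply summable_le_master 1 (fun n => by positivity)
  intro n
  rw [one_mul]
  apply div_le_div_of_nonneg_left (sq_nonneg _) (by positivity)
  have : (0:ℝ) ≤ ((u+1:ℕ):ℝ) := Nat.cast_nonneg _
  nlinarith [sq_nonneg ((n:ℝ)+1)]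

end Stage5
theorem stmt5 (k : ℕ) (hk : 0 < k) :
    ∑' n : ℕ, H (n + 1) ^ 2 / (((n : ℝ) + 1) * ((n : ℝ) + 1 + k)) =
      (1 / (k : ℝ)) *
        (3 * Z 3 + (H k ^ 3 + 3 * H k * zh 2 k + 2 * zh 3 k) / 3 -
          (H k ^ 2 + zh 2 k) / k - ∑ i ∈ Finset.Icc 1 (k - 1), H i / (i : ℝ) ^ 2 +
          Z 2 * H (k - 1)) := by
  obtain ⟨u, rfl⟩ : ∃ u, k = u + 1 := ⟨k - 1, by omega⟩
  have hp : ((u:ℝ)+1) ≠ 0 := by positivity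
  have hfin : HasSum
      (fun n : ℕ => ∑ l ∈ Finset.range (u+1),
        H (n+1)^2 * ((1:ℝ)/((n:ℝ)+1+l) - 1/((n:ℝ)+2+l)))
      (∑ l ∈ Finset.range (u+1), Cv l) := hasSum_sum (fun l _ => hC l)
  have hfun : (fun n : ℕ => ∑ l ∈ Finset.range (u+1),
      H (n+1)^2 * ((1:ℝ)/((n:ℝ)+1+l) - 1/((n:ℝ)+2+l))) =
      fun n : ℕ => ((u:ℝ)+1) * (H (n+1)^2 / (((n:ℝ)+1)*((n:ℝ)+1+((u+1:ℕ):ℝ)))) := by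
    funext n
    rw [← Finset.mul_sum]
    have hs : ∑ l ∈ Finset.range (u+1), ((1:ℝ)/((n:ℝ)+1+l) - 1/((n:ℝ)+2+l)) =
        1/((n:ℝ)+1) - 1/((n:ℝ)+1+((u+1:ℕ):ℝ)) := by
      rw [← ftele (u+1) n]
      apply Finset.sum_congr rfl
      intro t _
      have h1 : ((n:ℝ)+1+t) > 0 := by positivity
      have h2 : ((n:ℝ)+2+t) > 0 := by positivity
      field_simp
      ring
    rw [hs]
    have h1 : ((n:ℝ)+1) > 0 := by positivity
    have h2 : ((n:ℝ)+1+((u+1:ℕ):ℝ)) > 0 := by positivity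
    push_cast at h2 ⊢
    field_simp
    ring
  rw [hfun] at hfin
  have h2 := hfin.div_const ((u:ℝ)+1)
  have h3 : (fun n : ℕ => H (n+1)^2 / (((n:ℝ)+1)*((n:ℝ)+1+((u+1:ℕ):ℝ)))) =
      fun n : ℕ => ((u:ℝ)+1) * (H (n+1)^2 / (((n:ℝ)+1)*((n:ℝ)+1+((u+1:ℕ):ℝ)))) / ((u:ℝ)+1) := by
    funext n
    field_simp
  have h4 : HasSum (fun n : ℕ => H (n+1)^2 / (((n:ℝ)+1)*((n:ℝ)+1+((u+1:ℕ):ℝ))))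
      ((∑ l ∈ Finset.range (u+1), Cv l) / ((u:ℝ)+1)) := by
    rw [h3]; exact h2
  rw [h4.tsum_eq, Cv_range u]
  simp only [Nat.add_sub_cancel]
  push_cast
  field_simp
  ring
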